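/- Let σ₁ = ⟨(1,0,0),(0,0,1),(3,1,0),(6,8,9)⟩ ⊆ ℝ³ (a maximal cone of the dual Newton polyhedron of the hypersurface y³ + xz² − x⁴ = 0). Then the Hilbert basis of σ₁ is exactly { (1,0,0), (0,0,1), (3,1,0), (6,8,9), (1,1,1), (3,4,5) }; that is, these six vectors are precisely the irreducible elements of S_{σ₁} = σ₁ ∩ ℤ³, and they generate the monoid S_{σ₁}. -/

import Mathlib

open scoped BigOperators

/-- The real-coordinate vector attached to an integer vector. -/
def toR {n : ℕ} (u : Fin n → ℤ) : Fin n → ℝ := fun j => (u j : ℝ)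

/-- The rational polyhedral cone generated by integer vectors `v 0, …, v (r-1)`:
all nonnegative real linear combinations of the generators. -/
def coneOf {n r : ℕ} (v : Fin r → (Fin n → ℤ)) : Set (Fin n → ℝ) :=
  { x | ∃ c : Fin r → ℝ, (∀ i, 0 ≤ c i) ∧ x = ∑ i, c i • toR (v i) }

/-- The lattice points of a subset of `ℝⁿ`: `S_σ = σ ∩ ℤⁿ`. -/
def latticePoints {n : ℕ} (σ : Set (Fin n → ℝ)) : Set (Fin n → ℤ) :=
  { u | toR u ∈ σ }

/-- `u` is an irreducible element of `S`: it is a nonzero element of `S` which cannot be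
written as the sum of two nonzero elements of `S`. -/
def IsIrreducibleElt {n : ℕ} (S : Set (Fin n → ℤ)) (u : Fin n → ℤ) : Prop :=
  u ∈ S ∧ u ≠ 0 ∧ ∀ a b : Fin n → ℤ, a ∈ S → b ∈ S → u = a + b → a = 0 ∨ b = 0

/-- The Hilbert basis of (the monoid of lattice points of) a cone:
the set of its irreducible elements. -/
def hilbertBasis {n : ℕ} (S : Set (Fin n → ℤ)) : Set (Fin n → ℤ) :=
  { u | IsIrreducibleElt S u }

lemma mem_S_iff (u : Fin 3 → ℤ) :
    u ∈ latticePoints (coneOf ![![1, 0, 0], ![0, 0, 1], ![3, 1, 0], ![6, 8, 9]]) ↔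
      (0 ≤ u 1 ∧ 0 ≤ u 2 ∧ 3 * u 1 ≤ 4 * u 0 ∧ 3 * u 1 ≤ u 0 + 2 * u 2) := by
  simp only [latticePoints, coneOf, Set.mem_setOf_eq]
  constructor
  · rintro ⟨c, hc, h⟩
    have h0 := congrFun h 0
    have h1 := congrFun h 1
    have h2 := congrFun h 2
    simp [Fin.sum_univ_four, toR] at h0 h1 h2
    have c0 := hc 0; have c1 := hc 1; have c2 := hc 2; have c3 := hc 3
    refine ⟨?_, ?_, ?_, ?_⟩ <;> [skip; skip; skip; skip]
    · have : (0:ℝ) ≤ (u 1 : ℝ) := by rw [h1]; linarith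
      exact_mod_cast this
    · have : (0:ℝ) ≤ (u 2 : ℝ) := by rw [h2]; linarith
      exact_mod_cast this
    · have : (3 * (u 1) : ℝ) ≤ 4 * (u 0) := by rw [h0, h1]; linarith
      exact_mod_cast this
    · have : (3 * (u 1) : ℝ) ≤ (u 0) + 2 * (u 2) := by rw [h0, h1, h2]; linarith
      exact_mod_cast this
  · rintro ⟨h1, h2, h3, h4⟩
    have h1' : (0:ℝ) ≤ (u 1 : ℝ) := by exact_mod_cast h1
    have h2' : (0:ℝ) ≤ (u 2 : ℝ) := by exact_mod_cast h2
    have h3' : (3 * (u 1) : ℝ) ≤ 4 * (u 0) := by exact_mod_cast h3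
    have h4' : (3 * (u 1) : ℝ) ≤ (u 0) + 2 * (u 2) := by exact_mod_cast h4
    by_cases hc : 9 * u 1 ≤ 8 * u 2
    · have hc' : (9 * (u 1) : ℝ) ≤ 8 * (u 2) := by exact_mod_cast hc
      refine ⟨![(u 0 : ℝ) - 3 * (u 1) / 4, (u 2 : ℝ) - 9 * (u 1) / 8, 0, (u 1 : ℝ) / 8],
        ?_, ?_⟩
      · intro i; fin_cases i <;> simp <;> linarith
      · funext j; fin_cases j <;>
          simp [Fin.sum_univ_four, toR] <;> ring
    · push_neg at hc
      have hc' : (8 * (u 2) : ℝ) ≤ 9 * (u 1) := by exact_mod_cast hc.le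
      refine ⟨![(u 0 : ℝ) - 3 * (u 1) + 2 * (u 2), 0, (u 1 : ℝ) - 8 * (u 2) / 9, (u 2 : ℝ) / 9],
        ?_, ?_⟩
      · intro i; fin_cases i <;> simp <;> linarith
      · funext j; fin_cases j <;>
          simp [Fin.sum_univ_four, toR] <;> ring

lemma vec3_eq_zero (a : Fin 3 → ℤ) (h0 : a 0 = 0) (h1 : a 1 = 0) (h2 : a 2 = 0) : a = 0 := by
  funext i; fin_cases i <;> simpa

lemma vec3_split (u : Fin 3 → ℤ) (a b c : ℤ) :
    u = ![a, b, c] + ![u 0 - a, u 1 - b, u 2 - c] := by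
  funext i; fin_cases i <;> simp

def Bset : Set (Fin 3 → ℤ) :=
  {![1, 0, 0], ![0, 0, 1], ![3, 1, 0], ![6, 8, 9], ![1, 1, 1], ![3, 4, 5]}

set_option maxHeartbeats 2000000 in
lemma descent (x y z : ℤ) (h1 : 0 ≤ y) (h2 : 0 ≤ z) (h3 : 3*y ≤ 4*x) (h4 : 3*y ≤ x + 2*z)
    (hne : ¬(x = 0 ∧ y = 0 ∧ z = 0)) :
    (0 ≤ y ∧ 0 ≤ z ∧ 3*y ≤ 4*(x-1) ∧ 3*y ≤ (x-1) + 2*z) ∨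
    (0 ≤ y ∧ 0 ≤ z-1 ∧ 3*y ≤ 4*x ∧ 3*y ≤ x + 2*(z-1)) ∨
    (0 ≤ y-1 ∧ 0 ≤ z ∧ 3*(y-1) ≤ 4*(x-3) ∧ 3*(y-1) ≤ (x-3) + 2*z) ∨
    (0 ≤ y-8 ∧ 0 ≤ z-9 ∧ 3*(y-8) ≤ 4*(x-6) ∧ 3*(y-8) ≤ (x-6) + 2*(z-9)) ∨
    (0 ≤ y-1 ∧ 0 ≤ z-1 ∧ 3*(y-1) ≤ 4*(x-1) ∧ 3*(y-1) ≤ (x-1) + 2*(z-1)) ∨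
    (0 ≤ y-4 ∧ 0 ≤ z-5 ∧ 3*(y-4) ≤ 4*(x-3) ∧ 3*(y-4) ≤ (x-3) + 2*(z-5)) := by
  by_cases c1 : 3*y+4 ≤ 4*x ∧ 3*y+1 ≤ x+2*z
  · exact Or.inl ⟨by omega, by omega, by omega, by omega⟩
  by_cases c2 : 1 ≤ z ∧ 3*y+2 ≤ x+2*z
  · exact Or.inr (Or.inl ⟨by omega, by omega, by omega, by omega⟩)
  by_cases c5 : 1 ≤ y ∧ 1 ≤ z ∧ 3*y+1 ≤ 4*x
  · exact Or.inr (Or.inr (Or.inr (Or.inr (Or.inl ⟨by omega, by omega, by omega, by omega⟩))))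
  by_cases c3 : 1 ≤ y ∧ 3*y+9 ≤ 4*x
  · exact Or.inr (Or.inr (Or.inl ⟨by omega, by omega, by omega, by omega⟩))
  by_cases c6 : 4 ≤ y ∧ 5 ≤ z ∧ 3*y+1 ≤ x+2*z
  · exact Or.inr (Or.inr (Or.inr (Or.inr (Or.inr ⟨by omega, by omega, by omega, by omega⟩))))
  have d1 : 4*x ≤ 3*y + 3 ∨ x + 2*z ≤ 3*y := by
    by_contra h; push_neg at h; exact c1 ⟨by omega, by omega⟩
  have d2 : z ≤ 0 ∨ x + 2*z ≤ 3*y + 1 := by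
    by_contra h; push_neg at h; exact c2 ⟨by omega, by omega⟩
  have d5 : y ≤ 0 ∨ z ≤ 0 ∨ 4*x ≤ 3*y := by
    by_contra h; push_neg at h; exact c5 ⟨by omega, by omega, by omega⟩
  have d3 : y ≤ 0 ∨ 4*x ≤ 3*y + 8 := by
    by_contra h; push_neg at h; exact c3 ⟨by omega, by omega⟩
  have d6 : y ≤ 3 ∨ z ≤ 4 ∨ x + 2*z ≤ 3*y := by
    by_contra h; push_neg at h; exact c6 ⟨by omega, by omega, by omega⟩
  have hpos : 1 ≤ x + y + z := by
    by_contra h; push_neg at h; exact hne ⟨by omega, by omega, by omega⟩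
  clear hne
  by_cases hq : 4*x = 3*y ∧ x + 2*z ≤ 3*y + 1
  · obtain ⟨t, rfl⟩ : ∃ t, x = 3*t := ⟨x / 3, by omega⟩
    have hy : y = 4*t := by omega
    subst hy
    refine Or.inr (Or.inr (Or.inr (Or.inl ⟨?_, ?_, ?_, ?_⟩))) <;>
      (rcases d6 with e6 | e6 | e6 <;> rcases le_or_gt t 0 with ht | ht <;>
        rcases le_or_gt t 1 with ht' | ht' <;> omega)
  · exfalso
    have dq : 3*y+1 ≤ 4*x ∨ 3*y+2 ≤ x+2*z := by
      by_contra h; push_neg at h; exact hq ⟨by omega, by omega⟩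
    clear c1 c2 c3 c5 c6 hq
    rcases dq with eq | eq <;> rcases d1 with e1 | e1 <;> rcases d2 with e2 | e2 <;>
      rcases d5 with e5 | e5 | e5 <;> rcases d3 with e3 | e3 <;> omega

lemma closure_of_ineqs : ∀ N : ℕ, ∀ u : Fin 3 → ℤ,
    0 ≤ u 1 → 0 ≤ u 2 → 3 * u 1 ≤ 4 * u 0 → 3 * u 1 ≤ u 0 + 2 * u 2 →
    5 * u 0 - 5 * u 1 + 3 * u 2 ≤ (N : ℤ) →
    u ∈ AddSubmonoid.closure Bset := by
  intro N
  induction N using Nat.strong_induction_on with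
  | _ N IH =>
    intro u h1 h2 h3 h4 hN
    by_cases h0 : u = 0
    · subst h0; exact zero_mem _
    have hne : ¬(u 0 = 0 ∧ u 1 = 0 ∧ u 2 = 0) := by
      rintro ⟨a, b, c⟩; exact h0 (vec3_eq_zero u a b c)
    have hNpos : 3 ≤ (N : ℤ) := by
      have := descent (u 0) (u 1) (u 2) h1 h2 h3 h4 hne
      omega
    rcases descent (u 0) (u 1) (u 2) h1 h2 h3 h4 hne with h | h | h | h | h | h
    · rw [vec3_split u 1 0 0]
      refine add_mem (AddSubmonoid.subset_closure (by simp [Bset]))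
        (IH (N - 3) (by omega) _ ?_ ?_ ?_ ?_ ?_) <;> simp <;> omega
    · rw [vec3_split u 0 0 1]
      refine add_mem (AddSubmonoid.subset_closure (by simp [Bset]))
        (IH (N - 3) (by omega) _ ?_ ?_ ?_ ?_ ?_) <;> simp <;> omega
    · rw [vec3_split u 3 1 0]
      refine add_mem (AddSubmonoid.subset_closure (by simp [Bset]))
        (IH (N - 3) (by omega) _ ?_ ?_ ?_ ?_ ?_) <;> simp <;> omega
    · rw [vec3_split u 6 8 9]
      refine add_mem (AddSubmonoid.subset_closure (by simp [Bset]))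
        (IH (N - 3) (by omega) _ ?_ ?_ ?_ ?_ ?_) <;> simp <;> omega
    · rw [vec3_split u 1 1 1]
      refine add_mem (AddSubmonoid.subset_closure (by simp [Bset]))
        (IH (N - 3) (by omega) _ ?_ ?_ ?_ ?_ ?_) <;> simp <;> omega
    · rw [vec3_split u 3 4 5]
      refine add_mem (AddSubmonoid.subset_closure (by simp [Bset]))
        (IH (N - 3) (by omega) _ ?_ ?_ ?_ ?_ ?_) <;> simp <;> omega

lemma mem_B_iff (u : Fin 3 → ℤ) :
    u ∈ Bset ↔ u = ![1,0,0] ∨ u = ![0,0,1] ∨ u = ![3,1,0] ∨ u = ![6,8,9] ∨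
      u = ![1,1,1] ∨ u = ![3,4,5] := by
  simp [Bset, Set.mem_insert_iff, Set.mem_singleton_iff]

lemma closure_eq_S :
    (AddSubmonoid.closure Bset : Set (Fin 3 → ℤ)) =
      latticePoints (coneOf ![![1, 0, 0], ![0, 0, 1], ![3, 1, 0], ![6, 8, 9]]) := by
  ext u
  constructor
  · intro hu
    rw [mem_S_iff]
    induction hu using AddSubmonoid.closure_induction with
    | mem w hw =>
      rcases (mem_B_iff w).1 hw with rfl | rfl | rfl | rfl | rfl | rfl <;> norm_num [Matrix.cons_val_two]
    | zero => norm_num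
    | add a b _ _ ha hb =>
      simp only [Pi.add_apply]
      constructor
      · omega
      constructor
      · omega
      constructor
      · omega
      · omega
  · intro hu
    rw [mem_S_iff] at hu
    obtain ⟨h1, h2, h3, h4⟩ := hu
    exact closure_of_ineqs (5 * u 0 - 5 * u 1 + 3 * u 2).toNat u h1 h2 h3 h4 (by omega)

lemma hb_eq_B :
    hilbertBasis (latticePoints (coneOf ![![1, 0, 0], ![0, 0, 1], ![3, 1, 0], ![6, 8, 9]]))
      = Bset := by
  ext u
  simp only [hilbertBasis, IsIrreducibleElt, Set.mem_setOf_eq]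
  constructor
  · rintro ⟨hu, hne, hirr⟩
    rw [mem_S_iff] at hu
    obtain ⟨h1, h2, h3, h4⟩ := hu
    have hne' : ¬(u 0 = 0 ∧ u 1 = 0 ∧ u 2 = 0) := by
      rintro ⟨a, b, c⟩; exact hne (vec3_eq_zero u a b c)
    rw [mem_B_iff]
    rcases descent (u 0) (u 1) (u 2) h1 h2 h3 h4 hne' with h | h | h | h | h | h
    · rcases hirr ![1,0,0] ![u 0 - 1, u 1 - 0, u 2 - 0]
        ((mem_S_iff _).2 (by norm_num [Matrix.cons_val_two])) ((mem_S_iff _).2 (by simp; omega))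
        (vec3_split u 1 0 0) with hz | hz
      · exact absurd (congrFun hz 0) (by norm_num)
      · have e0 := congrFun hz 0; have e1 := congrFun hz 1; have e2 := congrFun hz 2
        simp at e0 e1 e2
        exact Or.inl (by funext i; fin_cases i <;> simp <;> omega)
    · rcases hirr ![0,0,1] ![u 0 - 0, u 1 - 0, u 2 - 1]
        ((mem_S_iff _).2 (by norm_num [Matrix.cons_val_two])) ((mem_S_iff _).2 (by simp; omega))
        (vec3_split u 0 0 1) with hz | hz
      · exact absurd (congrFun hz 2) (by norm_num [Matrix.cons_val_two])
      · have e0 := congrFun hz 0; have e1 := congrFun hz 1; have e2 := congrFun hz 2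
        simp at e0 e1 e2
        exact Or.inr (Or.inl (by funext i; fin_cases i <;> simp <;> omega))
    · rcases hirr ![3,1,0] ![u 0 - 3, u 1 - 1, u 2 - 0]
        ((mem_S_iff _).2 (by norm_num [Matrix.cons_val_two])) ((mem_S_iff _).2 (by simp; omega))
        (vec3_split u 3 1 0) with hz | hz
      · exact absurd (congrFun hz 0) (by norm_num)
      · have e0 := congrFun hz 0; have e1 := congrFun hz 1; have e2 := congrFun hz 2
        simp at e0 e1 e2
        exact Or.inr (Or.inr (Or.inl (by funext i; fin_cases i <;> simp <;> omega)))
    · rcases hirr ![6,8,9] ![u 0 - 6, u 1 - 8, u 2 - 9]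
        ((mem_S_iff _).2 (by norm_num [Matrix.cons_val_two])) ((mem_S_iff _).2 (by simp; omega))
        (vec3_split u 6 8 9) with hz | hz
      · exact absurd (congrFun hz 0) (by norm_num)
      · have e0 := congrFun hz 0; have e1 := congrFun hz 1; have e2 := congrFun hz 2
        simp at e0 e1 e2
        exact Or.inr (Or.inr (Or.inr (Or.inl (by funext i; fin_cases i <;> simp <;> omega))))
    · rcases hirr ![1,1,1] ![u 0 - 1, u 1 - 1, u 2 - 1]
        ((mem_S_iff _).2 (by norm_num [Matrix.cons_val_two])) ((mem_S_iff _).2 (by simp; omega))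
        (vec3_split u 1 1 1) with hz | hz
      · exact absurd (congrFun hz 0) (by norm_num)
      · have e0 := congrFun hz 0; have e1 := congrFun hz 1; have e2 := congrFun hz 2
        simp at e0 e1 e2
        exact Or.inr (Or.inr (Or.inr (Or.inr (Or.inl
          (by funext i; fin_cases i <;> simp <;> omega)))))
    · rcases hirr ![3,4,5] ![u 0 - 3, u 1 - 4, u 2 - 5]
        ((mem_S_iff _).2 (by norm_num [Matrix.cons_val_two])) ((mem_S_iff _).2 (by simp; omega))
        (vec3_split u 3 4 5) with hz | hz
      · exact absurd (congrFun hz 0) (by norm_num)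
      · have e0 := congrFun hz 0; have e1 := congrFun hz 1; have e2 := congrFun hz 2
        simp at e0 e1 e2
        exact Or.inr (Or.inr (Or.inr (Or.inr (Or.inr
          (by funext i; fin_cases i <;> simp <;> omega)))))
  · intro hu
    rcases (mem_B_iff u).1 hu with rfl | rfl | rfl | rfl | rfl | rfl <;>
    · refine ⟨(mem_S_iff _).2 (by norm_num [Matrix.cons_val_two]), ?_, ?_⟩
      · intro h
        have := congrFun h 0
        have := congrFun h 1
        have := congrFun h 2
        simp at *
      · intro a b ha hb hab
        rw [mem_S_iff] at ha hb
        have e0 := congrFun hab 0; have e1 := congrFun hab 1; have e2 := congrFun hab 2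
        simp only [Pi.add_apply] at e0 e1 e2
        norm_num [Matrix.cons_val_two] at e0 e1 e2
        have key : (a 0 = 0 ∧ a 1 = 0 ∧ a 2 = 0) ∨ (b 0 = 0 ∧ b 1 = 0 ∧ b 2 = 0) := by
          omega
        rcases key with ⟨k0, k1, k2⟩ | ⟨k0, k1, k2⟩
        · exact Or.inl (vec3_eq_zero a k0 k1 k2)
        · exact Or.inr (vec3_eq_zero b k0 k1 k2)

/-- the Hilbert basis of the cone
`σ₁ = ⟨(1,0,0),(0,0,1),(3,1,0),(6,8,9)⟩` of the dual Newton polyhedron of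
`y³ + xz² − x⁴ = 0` is exactly `{(1,0,0),(0,0,1),(3,1,0),(6,8,9),(1,1,1),(3,4,5)}`, and
these six vectors generate the monoid `S_{σ₁} = σ₁ ∩ ℤ³`. -/
theorem elliptic_sigma1_hilbert_basis :
    let S := latticePoints (coneOf ![![1, 0, 0], ![0, 0, 1], ![3, 1, 0], ![6, 8, 9]])
    let B : Set (Fin 3 → ℤ) :=
      {![1, 0, 0], ![0, 0, 1], ![3, 1, 0], ![6, 8, 9], ![1, 1, 1], ![3, 4, 5]}
    hilbertBasis S = B ∧ (AddSubmonoid.closure B : Set (Fin 3 → ℤ)) = S := by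
  intro S B
  have hB : B = Bset := rfl
  refine ⟨?_, ?_⟩
  · rw [hB, ← hb_eq_B]
  · rw [hB, closure_eq_S]
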